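/- For every graph $G$ on $n$ vertices with connected-set counts $c_k$, we have $2c_k \leq (n-k+1)c_{k-1}$ for all $k \in \{2,\dots,n\}$. -/

import Mathlib

open Finset
open scoped Classical

/-- The node reliability polynomial of a graph `G`: the probability that the set of
operational nodes is nonempty and induces a connected subgraph, when each node
operates independently with probability `p`. -/
noncomputable def nRel {V : Type*} [Fintype V] (G : SimpleGraph V) (p : ℝ) : ℝ :=
  ∑ s : Finset V, if (G.induce (s : Set V)).Connected
    then p ^ s.card * (1 - p) ^ (Fintype.card V - s.card) else 0

/-- `cCount G k` is the number of `k`-element vertex subsets of `G` inducing a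
connected subgraph (note: `SimpleGraph.Connected` requires nonemptiness). -/
noncomputable def cCount {V : Type*} [Fintype V] (G : SimpleGraph V) (k : ℕ) : ℕ :=
  ((Finset.univ : Finset (Finset V)).filter
    (fun s : Finset V => s.card = k ∧ (G.induce (s : Set V)).Connected)).card


lemma induce_conn_iff {V : Type*} (G : SimpleGraph V) (s : Set V) :
    (G.induce s).Connected ↔ s.Nonempty ∧
      ∀ ⦃u⦄, u ∈ s → ∀ ⦃v⦄, v ∈ s → ∃ p : G.Walk u v, ∀ w ∈ p.support, w ∈ s := by
  rw [SimpleGraph.connected_induce_iff,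
    SimpleGraph.Subgraph.connected_iff_forall_exists_walk_subgraph]
  constructor
  · rintro ⟨hne, h⟩
    refine ⟨hne, fun u hu v hv => ?_⟩
    obtain ⟨p, hp⟩ := h hu hv
    exact ⟨p, fun w hw => hp.1 (by rwa [SimpleGraph.Walk.mem_verts_toSubgraph])⟩
  · rintro ⟨hne, h⟩
    refine ⟨hne, fun {u v} hu hv => ?_⟩
    obtain ⟨p, hp⟩ := h hu hv
    refine ⟨p, le_trans p.toSubgraph_le_induce_support ?_⟩
    exact SimpleGraph.Subgraph.induce_mono le_rfl (fun w hw => hp w hw)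

lemma erase_connected {V : Type*} (G : SimpleGraph V) (s : Finset V)
    (hc : (G.induce (s : Set V)).Connected) (a b : (s : Set V))
    (hmax : ∀ x y : (s : Set V),
      (G.induce (s : Set V)).dist x y ≤ (G.induce (s : Set V)).dist a b)
    (hab : a ≠ b) :
    (G.induce ((s.erase b.1 : Finset V) : Set V)).Connected := by
  set H := G.induce (s : Set V) with hH
  rw [induce_conn_iff]
  have hab1 : a.1 ≠ b.1 := fun h => hab (Subtype.ext h)
  have hmem : ∀ {w : V}, w ∈ (↑(s.erase b.1) : Set V) ↔ w ≠ b.1 ∧ w ∈ s := by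
    intro w
    rw [Finset.mem_coe, Finset.mem_erase]
  have key : ∀ w (hw : w ∈ s) (hwb : w ≠ b.1), ∃ p : G.Walk a.1 w,
      ∀ x ∈ p.support, x ∈ (↑(s.erase b.1) : Set V) := by
    intro w hw hwb
    set w' : (s : Set V) := ⟨w, hw⟩ with hw'
    obtain ⟨q, hq⟩ := hc.exists_walk_length_eq_dist a w'
    have hbq : b ∉ q.support := by
      intro hb
      have h1 : H.dist a b ≤ (q.takeUntil b hb).length := SimpleGraph.dist_le _
      have h2 : H.dist b w' ≤ (q.dropUntil b hb).length := SimpleGraph.dist_le _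
      have h3 : (q.takeUntil b hb).length + (q.dropUntil b hb).length = q.length := by
        have := congrArg SimpleGraph.Walk.length (q.take_spec hb)
        rwa [SimpleGraph.Walk.length_append] at this
      have h4 : 0 < H.dist b w' :=
        hc.pos_dist_of_ne (fun h => hwb (congrArg Subtype.val h).symm)
      have h5 := hmax a w'
      omega
    refine ⟨q.map (SimpleGraph.Embedding.induce (s : Set V)).toHom, ?_⟩
    intro x hx
    erw [SimpleGraph.Walk.support_map, List.mem_map] at hx
    obtain ⟨y, hy, rfl⟩ := hx
    refine hmem.2 ⟨fun h => hbq ?_, y.2⟩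
    · have : y = b := Subtype.ext h
      rwa [this] at hy
  have ha' : a.1 ∈ (↑(s.erase b.1) : Set V) := hmem.2 ⟨hab1, a.2⟩
  refine ⟨⟨a.1, ha'⟩, fun u hu v hv => ?_⟩
  obtain ⟨hu1, hu2⟩ := hmem.1 hu
  obtain ⟨hv1, hv2⟩ := hmem.1 hv
  obtain ⟨p1, hp1⟩ := key u hu2 hu1
  obtain ⟨p2, hp2⟩ := key v hv2 hv1
  refine ⟨p1.reverse.append p2, fun x hx => ?_⟩
  rw [SimpleGraph.Walk.mem_support_append_iff] at hx
  rcases hx with hx | hx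
  · exact hp1 x (by rwa [SimpleGraph.Walk.support_reverse, List.mem_reverse] at hx)
  · exact hp2 x hx

lemma exists_two_removable {V : Type*} (G : SimpleGraph V) (s : Finset V)
    (h2 : 2 ≤ s.card) (hc : (G.induce (s : Set V)).Connected) :
    ∃ a ∈ s, ∃ b ∈ s, a ≠ b ∧ (G.induce ((s.erase a : Finset V) : Set V)).Connected ∧
      (G.induce ((s.erase b : Finset V) : Set V)).Connected := by
  classical
  set H := G.induce (s : Set V) with hH
  haveI : Fintype ↥(s : Set V) := FinsetCoe.fintype s
  obtain ⟨x, hx, y, hy, hxy⟩ := Finset.one_lt_card.mp h2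
  have hne : (Finset.univ : Finset (↥(s : Set V) × ↥(s : Set V))).Nonempty :=
    ⟨⟨⟨x, hx⟩, ⟨x, hx⟩⟩, Finset.mem_univ _⟩
  obtain ⟨⟨a, b⟩, -, hmax'⟩ :=
    Finset.exists_max_image (Finset.univ : Finset (↥(s : Set V) × ↥(s : Set V)))
      (fun p => H.dist p.1 p.2) hne
  have hmax : ∀ u v : (s : Set V), H.dist u v ≤ H.dist a b := fun u v =>
    hmax' ⟨u, v⟩ (Finset.mem_univ _)
  have hdpos : 0 < H.dist a b := by
    refine lt_of_lt_of_le ?_ (hmax ⟨x, hx⟩ ⟨y, hy⟩)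
    exact hc.pos_dist_of_ne (fun h => hxy (congrArg Subtype.val h))
  have hab : a ≠ b := by
    intro h
    rw [h, SimpleGraph.dist_self] at hdpos
    exact lt_irrefl 0 hdpos
  have hmax2 : ∀ u v : (s : Set V), H.dist u v ≤ H.dist b a := by
    intro u v
    rw [SimpleGraph.dist_comm (u := b)]
    exact hmax u v
  refine ⟨a.1, a.2, b.1, b.2, fun h => hab (Subtype.ext h), ?_, ?_⟩
  · exact erase_connected G s hc b a hmax2 (fun h => hab h.symm)
  · exact erase_connected G s hc a b hmax hab

theorem stmt2 {V : Type*} [Fintype V] (G : SimpleGraph V)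
    (n : ℕ) (hn : n = Fintype.card V)
    (k : ℕ) (hk2 : 2 ≤ k) (hkn : k ≤ n) :
    2 * cCount G k ≤ (n - k + 1) * cCount G (k - 1) := by
  classical
  set A := (Finset.univ : Finset (Finset V)).filter
    (fun s : Finset V => s.card = k ∧ (G.induce (s : Set V)).Connected) with hA
  set B := (Finset.univ : Finset (Finset V)).filter
    (fun s : Finset V => s.card = k - 1 ∧ (G.induce (s : Set V)).Connected) with hB
  set P := (Finset.univ : Finset (Finset V × V)).filter
    (fun p => p.2 ∈ p.1 ∧ p.1.card = k ∧ (G.induce (p.1 : Set V)).Connected ∧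
      (G.induce ((p.1.erase p.2 : Finset V) : Set V)).Connected) with hP
  have memP : ∀ {p : Finset V × V}, p ∈ P ↔ p.2 ∈ p.1 ∧ p.1.card = k ∧
      (G.induce (p.1 : Set V)).Connected ∧
      (G.induce ((p.1.erase p.2 : Finset V) : Set V)).Connected := by
    intro p; rw [hP, Finset.mem_filter]; simp
  have memA : ∀ {s : Finset V}, s ∈ A ↔ s.card = k ∧ (G.induce (s : Set V)).Connected := by
    intro s; rw [hA, Finset.mem_filter]; simp
  have memB : ∀ {s : Finset V}, s ∈ B ↔ s.card = k - 1 ∧ (G.induce (s : Set V)).Connected := by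
    intro s; rw [hB, Finset.mem_filter]; simp
  -- lower bound
  have hPA : ∀ p ∈ P, p.1 ∈ A := fun p hp => memA.2 ⟨(memP.1 hp).2.1, (memP.1 hp).2.2.1⟩
  have hcard1 : P.card = ∑ s ∈ A, (P.filter (fun p => p.1 = s)).card :=
    Finset.card_eq_sum_card_fiberwise hPA
  have hlow : 2 * A.card ≤ P.card := by
    rw [hcard1]
    calc 2 * A.card = ∑ _s ∈ A, 2 := by rw [Finset.sum_const, smul_eq_mul, Nat.mul_comm]
      _ ≤ ∑ s ∈ A, (P.filter (fun p => p.1 = s)).card := by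
          refine Finset.sum_le_sum fun s hs => ?_
          obtain ⟨hcardk, hconn⟩ := memA.1 hs
          have h2s : 2 ≤ s.card := by rw [hcardk]; exact hk2
          obtain ⟨a, ha, b, hb, hab, hca, hcb⟩ := exists_two_removable G s h2s hconn
          have hma : (s, a) ∈ P.filter (fun p => p.1 = s) := by
            rw [Finset.mem_filter]
            exact ⟨memP.2 ⟨ha, hcardk, hconn, hca⟩, rfl⟩
          have hmb : (s, b) ∈ P.filter (fun p => p.1 = s) := by
            rw [Finset.mem_filter]
            exact ⟨memP.2 ⟨hb, hcardk, hconn, hcb⟩, rfl⟩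
          have hsub : ({(s,a),(s,b)} : Finset (Finset V × V)) ⊆
              P.filter (fun p => p.1 = s) := by
            intro p hp
            rw [Finset.mem_insert, Finset.mem_singleton] at hp
            rcases hp with rfl|rfl
            exacts [hma, hmb]
          have hc2 : ({(s,a),(s,b)} : Finset (Finset V × V)).card = 2 :=
            Finset.card_pair (by simpa using hab)
          calc 2 = _ := hc2.symm
            _ ≤ _ := Finset.card_le_card hsub
  -- upper bound
  have hPB : ∀ p ∈ P, p.1.erase p.2 ∈ B := by
    intro p hp
    obtain ⟨h1, h2, h3, h4⟩ := memP.1 hp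
    exact memB.2 ⟨by rw [Finset.card_erase_of_mem h1, h2], h4⟩
  have hcard2 : P.card = ∑ t ∈ B, (P.filter (fun p => p.1.erase p.2 = t)).card :=
    Finset.card_eq_sum_card_fiberwise hPB
  have hup : P.card ≤ (n - k + 1) * B.card := by
    rw [hcard2]
    calc ∑ t ∈ B, (P.filter (fun p => p.1.erase p.2 = t)).card
        ≤ ∑ t ∈ B, (n - k + 1) := by
          refine Finset.sum_le_sum fun t ht => ?_
          have hinj : ∀ p ∈ P.filter (fun p => p.1.erase p.2 = t), p.2 ∈ Finset.univ \ t := by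
            intro p hp
            rw [Finset.mem_filter] at hp
            rw [Finset.mem_sdiff]
            refine ⟨Finset.mem_univ _, ?_⟩
            rw [← hp.2]
            exact Finset.notMem_erase _ _
          have : (P.filter (fun p => p.1.erase p.2 = t)).card ≤ (Finset.univ \ t).card := by
            refine Finset.card_le_card_of_injOn (fun p => p.2) hinj ?_
            intro p hp q hq hpq
            rw [Finset.mem_coe, Finset.mem_filter] at hp hq
            have h1 := (memP.1 hp.1).1
            have h2 := (memP.1 hq.1).1
            have hpq' : p.2 = q.2 := hpq
            have : p.1 = q.1 := by
              rw [← Finset.insert_erase h1, ← Finset.insert_erase h2, hp.2, hq.2, hpq']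
            exact Prod.ext this hpq'
          refine this.trans ?_
          rw [Finset.card_sdiff_of_subset (Finset.subset_univ t), Finset.card_univ, ← hn, (memB.1 ht).1]
          omega
      _ = (n - k + 1) * B.card := by rw [Finset.sum_const, smul_eq_mul, Nat.mul_comm]
  calc 2 * A.card ≤ P.card := hlow
    _ ≤ (n - k + 1) * B.card := hup
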